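/- arXiv:0907.3693 — 7 statements merged into one kernel-verified Lean document; each statement's English description precedes it below -/
import Mathlib

section
/- For 0 < ρ < 1 and any integer r ≥ 1, the identity Σ_{l=1}^{r-1} ((r-l)/l)(ρ/(1+ρ))^l = r·log(1+ρ) - ρ + ρ^r(1+ρ)^{1-r} - r·Σ_{l=r}^∞ (1/l)(ρ/(1+ρ))^l holds. -/
theorem stmt_1 (ρ : ℝ) (hρ0 : 0 < ρ) (hρ1 : ρ < 1) (r : ℕ) (hr : 1 ≤ r) :
    ∑ l ∈ Finset.Icc 1 (r-1), (((r:ℝ)-l)/l) * (ρ/(1+ρ))^l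
      = r * Real.log (1+ρ) - ρ + ρ^r * (1+ρ)^((1:ℤ)-r)
        - r * ∑' n : ℕ, (1/((n:ℝ)+r)) * (ρ/(1+ρ))^(n+r) := by
  obtain ⟨s, rfl⟩ : ∃ s, r = s + 1 := ⟨r - 1, by omega⟩
  have h1ρ : (0:ℝ) < 1 + ρ := by linarith
  set x := ρ/(1+ρ) with hx
  have hx0 : 0 < x := div_pos hρ0 h1ρ
  have hx1 : x < 1 := by rw [hx, div_lt_one h1ρ]; linarith
  have hxabs : |x| < 1 := by rw [abs_of_pos hx0]; exact hx1
  have hlog : Real.log (1 - x) = - Real.log (1+ρ) := by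
    have h : 1 - x = (1+ρ)⁻¹ := by rw [hx]; field_simp; ring
    rw [h, Real.log_inv]
  have hsum := Real.hasSum_pow_div_log_of_abs_lt_one hxabs
  rw [hlog, neg_neg] at hsum
  have hsimp : s + 1 - 1 = s := by omega
  rw [hsimp]
  set T := ∑' n : ℕ, (1/((n:ℝ)+(s+1))) * x^(n+(s+1)) with hT
  have hA : ∑ l ∈ Finset.Icc 1 s, x^l/(l:ℝ) = Real.log (1+ρ) - T := by
    have hkey := Summable.sum_add_tsum_nat_add s hsum.summable
    rw [hsum.tsum_eq] at hkey
    have hfin : ∑ i ∈ Finset.range s, x^(i+1)/((i:ℝ)+1)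
        = ∑ l ∈ Finset.Icc 1 s, x^l/(l:ℝ) := by
      rw [← Finset.Ico_add_one_right_eq_Icc, Finset.sum_Ico_eq_sum_range]
      apply Finset.sum_congr rfl
      intro i _
      push_cast
      ring_nf
    have htail : (∑' n : ℕ, x^(n+s+1)/(((n+s:ℕ):ℝ)+1)) = T := by
      rw [hT]
      apply tsum_congr
      intro n
      push_cast
      ring
    rw [hfin, htail] at hkey
    linarith
  have hB : ∑ l ∈ Finset.Icc 1 s, x^l = ρ - ρ^(s+1) * (1+ρ)^((1:ℤ)-(s+1:ℕ)) := by
    have hz : ((1:ℤ)-(s+1:ℕ)) = -(s:ℤ) := by push_cast; ring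
    rw [hz, zpow_neg, zpow_natCast]
    rw [← Finset.Ico_add_one_right_eq_Icc, Finset.sum_Ico_eq_sum_range]
    simp only [Nat.add_sub_cancel]
    have : ∑ i ∈ Finset.range s, x^(1+i) = x * ∑ i ∈ Finset.range s, x^i := by
      rw [Finset.mul_sum]
      apply Finset.sum_congr rfl
      intro i _
      rw [pow_add, pow_one]
    rw [this, geom_sum_eq hx1.ne]
    rw [hx, div_pow]
    have h1 : (1+ρ)^s ≠ 0 := by positivity
    have h2 : ρ/(1+ρ) - 1 ≠ 0 := by
      rw [← hx]; intro h; apply hx1.ne; linarith [sub_eq_zero.mp h]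
    field_simp
    ring
  have hsplit : ∀ l ∈ Finset.Icc 1 s, (((s:ℝ)+1)-l)/l * x^l
      = ((s:ℝ)+1)*(x^l/l) - x^l := by
    intro l hl
    have hl1 : 1 ≤ l := (Finset.mem_Icc.mp hl).1
    have hl0 : (l:ℝ) ≠ 0 := by positivity
    field_simp
  push_cast
  rw [Finset.sum_congr rfl hsplit, Finset.sum_sub_distrib, ← Finset.mul_sum, hA, hB]
  push_cast
  ring
end

section
/- For 0 < ρ < 1 and any integer r ≥ 1, Σ_{n=1}^∞ (n/(n+r))(ρ/(1+ρ))^n = (ρ(1+ρ)^r / r!) · Σ_{L=0}^∞ (-ρ)^L ((L+r)!/L!) (1/(L+r+1) + ρ/(L+r+2)). -/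
open MeasureTheory Set

lemma my_swap (f : ℕ → ℝ → ℝ) (hc : ∀ n, Continuous (f n)) (c : ℕ → ℝ)
    (hb : ∀ n, ∀ t ∈ Set.Ioc (0:ℝ) 1, ‖f n t‖ ≤ c n) (hs : Summable c) :
    ∫ t in (0:ℝ)..1, (∑' n, f n t) = ∑' n, ∫ t in (0:ℝ)..1, f n t := by
  have hc0 : ∀ n, 0 ≤ c n := fun n =>
    le_trans (norm_nonneg _) (hb n 1 ⟨one_pos, le_refl 1⟩)
  rw [intervalIntegral.integral_of_le zero_le_one]
  have := MeasureTheory.integral_tsum (μ := volume.restrict (Set.Ioc (0:ℝ) 1))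
    (f := f) (fun n => (hc n).aestronglyMeasurable.restrict) ?_
  · rw [this]
    exact tsum_congr fun n => (intervalIntegral.integral_of_le zero_le_one).symm
  · have key : ∀ n, ∫⁻ t in Set.Ioc (0:ℝ) 1, ‖f n t‖₊ ≤ ENNReal.ofReal (c n) := by
      intro n
      calc ∫⁻ t in Set.Ioc (0:ℝ) 1, (‖f n t‖₊ : ENNReal)
          ≤ ∫⁻ _ in Set.Ioc (0:ℝ) 1, ENNReal.ofReal (c n) := by
            apply setLIntegral_mono measurable_const
            intro x hx
            rw [← ENNReal.ofReal_coe_nnreal, coe_nnnorm]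
            exact ENNReal.ofReal_le_ofReal (hb n x hx)
        _ = ENNReal.ofReal (c n) := by
            rw [setLIntegral_const]
            simp [Real.volume_Ioc]
    apply ne_top_of_le_ne_top (b := ENNReal.ofReal (∑' n, c n)) ENNReal.ofReal_ne_top
    calc ∑' n, ∫⁻ t in Set.Ioc (0:ℝ) 1, (‖f n t‖₊ : ENNReal)
        ≤ ∑' n, ENNReal.ofReal (c n) := ENNReal.tsum_le_tsum key
      _ = ENNReal.ofReal (∑' n, c n) := (ENNReal.ofReal_tsum_of_nonneg hc0 hs).symm

lemma lhs_eq (ρ : ℝ) (hρ0 : 0 < ρ) (hρ1 : ρ < 1) (r : ℕ) (hr : 1 ≤ r) :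
    ∑' n : ℕ, (((n:ℝ)+1)/(((n:ℝ)+1)+r)) * (ρ/(1+ρ))^(n+1)
      = ρ - r * ρ * ∫ t in (0:ℝ)..1, t^r/(1+ρ*(1-t)) := by
  obtain ⟨m, rfl⟩ : ∃ m, r = m + 1 := ⟨r - 1, by omega⟩
  have h1ρ : (0:ℝ) < 1 + ρ := by linarith
  set x : ℝ := ρ/(1+ρ) with hx
  have hx0 : 0 < x := div_pos hρ0 h1ρ
  have hx1 : x < 1 := (div_lt_one h1ρ).2 (by linarith)
  have S1 : Summable (fun n : ℕ => x^(n+1)) := by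
    simpa [pow_succ'] using (summable_geometric_of_lt_one hx0.le hx1).mul_left x
  have S2 : Summable (fun n : ℕ => x^(n+1)/((n:ℝ)+1+(m+1:ℕ))) := by
    apply Summable.of_nonneg_of_le (fun n => by positivity) (fun n => ?_) S1
    rw [div_le_iff₀ (by positivity)]
    nlinarith [pow_pos hx0 (n+1), (by exact_mod_cast Nat.zero_le n : (0:ℝ) ≤ n)]
  -- rewrite each term
  have hterm : ∀ n : ℕ, (((n:ℝ)+1)/(((n:ℝ)+1)+(m+1:ℕ))) * x^(n+1)
      = x^(n+1) - ((m+1:ℕ):ℝ) * (x^(n+1)/((n:ℝ)+1+(m+1:ℕ))) := by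
    intro n
    have hd : ((n:ℝ)+1)+(m+1:ℕ) ≠ 0 := by positivity
    field_simp
    ring
  rw [tsum_congr hterm, S1.tsum_sub ((S2.mul_left _)), tsum_mul_left]
  -- geometric part
  have hgeo : ∑' n : ℕ, x^(n+1) = ρ := by
    have := tsum_geometric_of_lt_one hx0.le hx1
    calc ∑' n : ℕ, x^(n+1) = ∑' n : ℕ, x * x^n := by
          simp [pow_succ']
      _ = x * (1-x)⁻¹ := by rw [tsum_mul_left, this]
      _ = ρ := by
          rw [hx]
          have : 1 - ρ/(1+ρ) = 1/(1+ρ) := by field_simp; ring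
          rw [this]
          field_simp
  rw [hgeo]
  -- integral part
  have hxt : ∀ t ∈ Set.Icc (0:ℝ) 1, x * t < 1 := by
    intro t ht
    nlinarith [ht.1, ht.2]
  have key : ∑' n : ℕ, x^(n+1)/((n:ℝ)+1+(m+1:ℕ))
      = ρ * ∫ t in (0:ℝ)..1, t^(m+1)/(1+ρ*(1-t)) := by
    have swap := my_swap (fun n t => x^(n+1) * t^(n+(m+1))) 
      (fun n => by fun_prop) (fun n => x^(n+1)) ?_ S1
    · have e1 : ∀ n : ℕ, ∫ t in (0:ℝ)..1, x^(n+1) * t^(n+(m+1))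
          = x^(n+1)/((n:ℝ)+1+(m+1:ℕ)) := by
        intro n
        rw [intervalIntegral.integral_const_mul, integral_pow]
        push_cast
        ring
      have e2 : ∀ t ∈ Set.uIcc (0:ℝ) 1, (∑' n : ℕ, x^(n+1) * t^(n+(m+1)))
          = ρ * (t^(m+1)/(1+ρ*(1-t))) := by
        intro t ht
        rw [Set.uIcc_of_le zero_le_one] at ht
        have hxt' := hxt t ht
        have hxtnn : 0 ≤ x * t := mul_nonneg hx0.le ht.1
        have hden : (0:ℝ) < 1 + ρ*(1-t) := by nlinarith [ht.2]
        have hsum : ∑' n : ℕ, x^(n+1) * t^(n+(m+1))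
            = t^m * ((x*t) * (1 - x*t)⁻¹) := by
          calc ∑' n : ℕ, x^(n+1) * t^(n+(m+1))
              = ∑' n : ℕ, t^m * ((x*t) * (x*t)^n) := by
                apply tsum_congr; intro n; ring
            _ = t^m * ((x*t) * ∑' n : ℕ, (x*t)^n) := by
                rw [tsum_mul_left, tsum_mul_left]
            _ = t^m * ((x*t) * (1 - x*t)⁻¹) := by
                rw [tsum_geometric_of_lt_one hxtnn hxt']
        rw [hsum, hx]
        have h1 : 1 - ρ/(1+ρ)*t = (1+ρ*(1-t))/(1+ρ) := by field_simp; ring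
        rw [h1]
        field_simp
        ring
      rw [← tsum_congr e1, ← swap, intervalIntegral.integral_congr e2,
        intervalIntegral.integral_const_mul]
    · intro n t ht
      have ht1 : 0 < t := ht.1
      have : t^(n+(m+1)) ≤ 1 := pow_le_one₀ ht1.le ht.2
      rw [norm_mul, norm_pow, norm_pow]
      rw [Real.norm_eq_abs, Real.norm_eq_abs, abs_of_pos hx0, abs_of_pos ht1]
      nlinarith [pow_pos hx0 (n+1), pow_nonneg ht1.le (n+(m+1)), pow_pos ht1 (n+(m+1))]
  rw [key]
  ring

lemma rhs_eq (ρ : ℝ) (hρ0 : 0 < ρ) (hρ1 : ρ < 1) (r : ℕ) (hr : 1 ≤ r) :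
    (ρ * (1+ρ)^r / (Nat.factorial r)) *
        ∑' L : ℕ, (-ρ)^L * ((Nat.factorial (L+r) : ℝ)/(Nat.factorial L)) *
          (1/((L:ℝ)+r+1) + ρ/((L:ℝ)+r+2))
      = ρ * ∫ t in (0:ℝ)..1, ((1+ρ)*t/(1+ρ*t))^r := by
  have h1ρ : (0:ℝ) < 1 + ρ := by linarith
  -- factorial ratio = choose * r!
  have hfac : ∀ L : ℕ, ((Nat.factorial (L+r) : ℝ)/(Nat.factorial L))
      = ((L+r).choose r : ℝ) * (Nat.factorial r : ℝ) := by
    intro L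
    rw [div_eq_iff (Nat.cast_ne_zero.2 (Nat.factorial_pos L).ne' : (Nat.factorial L : ℝ) ≠ 0)]
    have := Nat.choose_mul_factorial_mul_factorial (Nat.le_add_left r L)
    rw [Nat.add_sub_cancel] at this
    push_cast [← this]
    ring
  -- the summand as an integral
  have hterm : ∀ L : ℕ, (-ρ)^L * ((Nat.factorial (L+r) : ℝ)/(Nat.factorial L)) *
      (1/((L:ℝ)+r+1) + ρ/((L:ℝ)+r+2))
      = ∫ t in (0:ℝ)..1, (-ρ)^L * ((Nat.factorial (L+r) : ℝ)/(Nat.factorial L)) *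
          (t^(L+r) + ρ * t^(L+r+1)) := by
    intro L
    rw [intervalIntegral.integral_const_mul]
    congr 1
    rw [intervalIntegral.integral_add (Continuous.intervalIntegrable (by fun_prop) _ _) (Continuous.intervalIntegrable (by fun_prop) _ _),
      intervalIntegral.integral_const_mul, integral_pow, integral_pow]
    push_cast
    ring
  have hsummable : Summable (fun L : ℕ => 2 * (Nat.factorial r : ℝ) *
      (((L+r).choose r : ℝ) * ρ^L)) := by
    apply Summable.mul_left
    exact summable_choose_mul_geometric_of_norm_lt_one (r := ρ) r
      (by rwa [Real.norm_eq_abs, abs_of_pos hρ0])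
  have hswap := my_swap
    (fun L t => (-ρ)^L * ((Nat.factorial (L+r) : ℝ)/(Nat.factorial L)) *
          (t^(L+r) + ρ * t^(L+r+1)))
    (fun L => by fun_prop)
    (fun L => 2 * (Nat.factorial r : ℝ) * (((L+r).choose r : ℝ) * ρ^L)) ?_ hsummable
  · rw [tsum_congr hterm, ← hswap]
    -- pointwise value of the inner sum
    have hpt : ∀ t ∈ Set.uIcc (0:ℝ) 1,
        (∑' L : ℕ, (-ρ)^L * ((Nat.factorial (L+r) : ℝ)/(Nat.factorial L)) *
          (t^(L+r) + ρ * t^(L+r+1)))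
        = ((Nat.factorial r : ℝ)/(1+ρ)^r) * ((1+ρ)*t/(1+ρ*t))^r := by
      intro t ht
      rw [Set.uIcc_of_le zero_le_one] at ht
      have htρ : ‖-ρ * t‖ < 1 := by
        rw [Real.norm_eq_abs, abs_mul, abs_neg, abs_of_pos hρ0, abs_of_nonneg ht.1]
        nlinarith [ht.2]
      have hden : (0:ℝ) < 1 + ρ * t := by nlinarith [ht.1]
      have hS := hasSum_choose_mul_geometric_of_norm_lt_one (𝕜 := ℝ) r htρ
      have hS2 : HasSum (fun L : ℕ => (-ρ)^L * ((Nat.factorial (L+r) : ℝ)/(Nat.factorial L)) *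
          (t^(L+r) + ρ * t^(L+r+1)))
          ((1 / (1 - (-ρ*t)) ^ (r+1)) * ((Nat.factorial r : ℝ) * (t^r + ρ * t^(r+1)))) := by
        have := hS.mul_right ((Nat.factorial r : ℝ) * (t^r + ρ * t^(r+1)))
        convert this using 2 with L
        · rfl
        rw [hfac L]
        rw [mul_pow, pow_add, pow_add]
        ring
      rw [hS2.tsum_eq]
      have h1 : 1 - (-ρ*t) = 1 + ρ*t := by ring
      rw [h1]
      rw [div_pow, mul_pow]
      field_simp
      ring
    rw [intervalIntegral.integral_congr hpt, intervalIntegral.integral_const_mul]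
    have hfacne : (Nat.factorial r : ℝ) ≠ 0 := by exact_mod_cast (Nat.factorial_pos r).ne'
    have hpne : ((1:ℝ)+ρ)^r ≠ 0 := by positivity
    field_simp
  · intro L t ht
    have ht0 : 0 < t := ht.1
    rw [hfac L]
    have h1 : ‖(-ρ)^L * (((L+r).choose r : ℝ) * (Nat.factorial r : ℝ)) * (t^(L+r) + ρ * t^(L+r+1))‖
        = ρ^L * (((L+r).choose r : ℝ) * (Nat.factorial r : ℝ)) * (t^(L+r) + ρ * t^(L+r+1)) := by
      rw [norm_mul, norm_mul, norm_pow, norm_neg, Real.norm_eq_abs, Real.norm_eq_abs,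
        Real.norm_eq_abs, abs_of_pos hρ0]
      rw [abs_of_nonneg (by positivity : (0:ℝ) ≤ ((L+r).choose r : ℝ) * (Nat.factorial r : ℝ)),
        abs_of_nonneg (by positivity : (0:ℝ) ≤ t^(L+r) + ρ * t^(L+r+1))]
    rw [h1]
    have htp1 : t^(L+r) ≤ 1 := pow_le_one₀ ht0.le ht.2
    have htp2 : t^(L+r+1) ≤ 1 := pow_le_one₀ ht0.le ht.2
    have hnn : (0:ℝ) ≤ ((L+r).choose r : ℝ) * (Nat.factorial r : ℝ) := by positivity
    have hb : t^(L+r) + ρ * t^(L+r+1) ≤ 2 := by nlinarith [pow_pos ht0 (L+r+1)]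
    calc ρ^L * (((L+r).choose r : ℝ) * (Nat.factorial r : ℝ)) * (t^(L+r) + ρ * t^(L+r+1))
        ≤ ρ^L * (((L+r).choose r : ℝ) * (Nat.factorial r : ℝ)) * 2 := by
          apply mul_le_mul_of_nonneg_left hb (by positivity)
      _ = 2 * (Nat.factorial r : ℝ) * (((L+r).choose r : ℝ) * ρ^L) := by ring

lemma core_eq (ρ : ℝ) (hρ0 : 0 < ρ) (r : ℕ) (hr : 1 ≤ r) :
    ∫ t in (0:ℝ)..1, ((1+ρ)*t/(1+ρ*t))^r
      = 1 - r * ∫ t in (0:ℝ)..1, t^r/(1+ρ*(1-t)) := by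
  obtain ⟨m, rfl⟩ : ∃ m, r = m + 1 := ⟨r - 1, by omega⟩
  have h1ρ : (0:ℝ) < 1 + ρ := by linarith
  have hden : ∀ t ∈ Set.uIcc (0:ℝ) 1, (0:ℝ) < 1 + ρ * t := by
    intro t ht
    rw [Set.uIcc_of_le zero_le_one] at ht
    nlinarith [ht.1]
  -- derivative of φ
  have hφ : ∀ t ∈ Set.uIcc (0:ℝ) 1,
      HasDerivAt (fun s => (1+ρ)*s/(1+ρ*s)) ((1+ρ)/(1+ρ*t)^2) t := by
    intro t ht
    have hd := hden t ht
    have h1 : HasDerivAt (fun s : ℝ => (1+ρ)*s) (1+ρ) t := by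
      simpa using (hasDerivAt_id t).const_mul (1+ρ)
    have h2 : HasDerivAt (fun s : ℝ => 1+ρ*s) ρ t := by
      simpa using ((hasDerivAt_id t).const_mul ρ).const_add 1
    have := h1.div h2 hd.ne'
    refine this.congr_deriv (Eq.symm ?_)
    field_simp
    ring
  -- continuity of φ^r and of φ^r/(1+ρt)
  have hcontφ : ContinuousOn (fun t : ℝ => ((1+ρ)*t/(1+ρ*t))^(m+1)) (Set.uIcc 0 1) := by
    apply ContinuousOn.pow
    exact ContinuousOn.div (by fun_prop) (by fun_prop) (fun t ht => (hden t ht).ne')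
  have hcont2 : ContinuousOn
      (fun t : ℝ => ((1+ρ)*t/(1+ρ*t))^(m+1) / (1+ρ*t)) (Set.uIcc 0 1) :=
    ContinuousOn.div hcontφ (by fun_prop) (fun t ht => (hden t ht).ne')
  -- FTC : ∫ (φ^r + r * φ^r/(1+ρt)) = 1
  have hderiv : ∀ t ∈ Set.uIcc (0:ℝ) 1,
      HasDerivAt (fun s => s * ((1+ρ)*s/(1+ρ*s))^(m+1))
        (((1+ρ)*t/(1+ρ*t))^(m+1) + ((m:ℝ)+1) * (((1+ρ)*t/(1+ρ*t))^(m+1) / (1+ρ*t))) t := by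
    intro t ht
    have hd := hden t ht
    have hpow := (hφ t ht).pow (m+1)
    have := (hasDerivAt_id t).mul hpow
    refine this.congr_deriv (Eq.symm ?_)
    simp only [Pi.pow_apply, id]
    push_cast
    rw [one_mul, pow_succ]
    field_simp
  have hFTC : ∫ t in (0:ℝ)..1,
      (((1+ρ)*t/(1+ρ*t))^(m+1) + ((m:ℝ)+1) * (((1+ρ)*t/(1+ρ*t))^(m+1) / (1+ρ*t)))
      = 1 := by
    rw [intervalIntegral.integral_eq_sub_of_hasDerivAt hderiv]
    · norm_num
      rw [div_self h1ρ.ne', one_pow]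
    · apply ContinuousOn.intervalIntegrable
      exact hcontφ.add (continuousOn_const.mul hcont2)
  -- substitution: K = ∫ φ^r/(1+ρt)
  have hsub : ∫ t in (0:ℝ)..1, t^(m+1)/(1+ρ*(1-t))
      = ∫ t in (0:ℝ)..1, ((1+ρ)*t/(1+ρ*t))^(m+1) / (1+ρ*t) := by
    have himg : (fun s => (1+ρ)*s/(1+ρ*s)) '' (Set.uIcc (0:ℝ) 1) ⊆ Set.Icc 0 1 := by
      rintro y ⟨t, ht, rfl⟩
      rw [Set.uIcc_of_le zero_le_one] at ht
      have hd : (0:ℝ) < 1 + ρ * t := by nlinarith [ht.1]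
      constructor
      · exact div_nonneg (by nlinarith [ht.1]) hd.le
      · rw [div_le_one hd]
        nlinarith [ht.1, ht.2]
    have hgcont : ContinuousOn (fun u : ℝ => u^(m+1)/(1+ρ*(1-u)))
        ((fun s => (1+ρ)*s/(1+ρ*s)) '' (Set.uIcc (0:ℝ) 1)) := by
      apply ContinuousOn.mono _ himg
      apply ContinuousOn.div (by fun_prop) (by fun_prop)
      intro u hu
      nlinarith [hu.2]
    have hcv := intervalIntegral.integral_comp_smul_deriv' hφ
      (ContinuousOn.div (by fun_prop) (by fun_prop) (fun t ht => (pow_pos (hden t ht) 2).ne')) hgcont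
    have e0 : (1+ρ)*(0:ℝ)/(1+ρ*0) = 0 := by norm_num
    have e1 : (1+ρ)*(1:ℝ)/(1+ρ*1) = 1 := by
      rw [mul_one, mul_one, div_self (by linarith)]
    rw [e0, e1] at hcv
    rw [← hcv]
    apply intervalIntegral.integral_congr
    intro t ht
    have hd := hden t ht
    have hkey : 1 + ρ*(1 - (1+ρ)*t/(1+ρ*t)) = (1+ρ)/(1+ρ*t) := by
      field_simp
      ring
    show ((1+ρ)/(1+ρ*t)^2) • (((1+ρ)*t/(1+ρ*t))^(m+1)/(1+ρ*(1-((1+ρ)*t/(1+ρ*t)))))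
      = ((1+ρ)*t/(1+ρ*t))^(m+1) / (1+ρ*t)
    rw [hkey, smul_eq_mul]
    rw [div_pow, mul_pow]
    field_simp
  -- combine
  have hsplit : ∫ t in (0:ℝ)..1,
      (((1+ρ)*t/(1+ρ*t))^(m+1) + ((m:ℝ)+1) * (((1+ρ)*t/(1+ρ*t))^(m+1) / (1+ρ*t)))
      = (∫ t in (0:ℝ)..1, ((1+ρ)*t/(1+ρ*t))^(m+1))
        + ((m:ℝ)+1) * ∫ t in (0:ℝ)..1, ((1+ρ)*t/(1+ρ*t))^(m+1) / (1+ρ*t) := by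
    rw [intervalIntegral.integral_add (hcontφ.intervalIntegrable)
      (show IntervalIntegrable (fun t => ((m:ℝ)+1) * (((1+ρ)*t/(1+ρ*t))^(m+1) / (1+ρ*t))) volume 0 1 from (continuousOn_const.mul hcont2).intervalIntegrable),
      intervalIntegral.integral_const_mul]
  rw [hsub]
  rw [hsplit] at hFTC
  push_cast
  linarith [hFTC]

theorem stmt_2 (ρ : ℝ) (hρ0 : 0 < ρ) (hρ1 : ρ < 1) (r : ℕ) (hr : 1 ≤ r) :
    ∑' n : ℕ, (((n:ℝ)+1)/(((n:ℝ)+1)+r)) * (ρ/(1+ρ))^(n+1)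
      = (ρ * (1+ρ)^r / (Nat.factorial r)) *
        ∑' L : ℕ, (-ρ)^L * ((Nat.factorial (L+r) : ℝ)/(Nat.factorial L)) *
          (1/((L:ℝ)+r+1) + ρ/((L:ℝ)+r+2)) := by
  rw [lhs_eq ρ hρ0 hρ1 r hr, rhs_eq ρ hρ0 hρ1 r hr, core_eq ρ hρ0 r hr]
  ring
end

section
/- For 0 < ρ < 1 and any integer r ≥ 1, ((1-ρ)/(1+ρ)) ρ^r Σ_{n=0}^∞ (n/(r+n)) (ρ/(1+ρ))^n = (1-ρ) ρ^{r+1} ∫₀¹ u^r/(1+ρ-uρ)² du; that is, the series representation of π(0,r) for m=1 equals its integral representation. -/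
open MeasureTheory

lemma aux_hasSum (t : ℝ) (h0 : 0 ≤ t) (h1 : t < 1) :
    HasSum (fun n : ℕ => (n+1:ℝ) * t^n) (1/(1-t)^2) := by
  have h : ‖t‖ < 1 := by rw [Real.norm_eq_abs, abs_of_nonneg h0]; exact h1
  have ht : (1:ℝ) - t ≠ 0 := by linarith
  have := (hasSum_coe_mul_geometric_of_norm_lt_one h).add (hasSum_geometric_of_norm_lt_one h)
  convert this using 1
  · rfl
  · ext n; ring
  · field_simp; ring

theorem stmt_3 (ρ : ℝ) (hρ0 : 0 < ρ) (hρ1 : ρ < 1) (r : ℕ) (hr : 1 ≤ r) :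
    ((1-ρ)/(1+ρ)) * ρ^r * ∑' n : ℕ, ((n:ℝ)/((r:ℝ)+n)) * (ρ/(1+ρ))^n
      = (1-ρ) * ρ^(r+1) * ∫ u in (0:ℝ)..1, u^r/(1+ρ-u*ρ)^2 := by
  have h1ρ : (0:ℝ) < 1 + ρ := by linarith
  set x : ℝ := ρ/(1+ρ) with hxdef
  have hx0 : 0 < x := div_pos hρ0 h1ρ
  have hx1 : x < 1 := by rw [hxdef, div_lt_one h1ρ]; linarith
  have hxρ : (1+ρ) * x = ρ := by rw [hxdef]; field_simp
  -- the family of functions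
  set F : ℕ → ℝ → ℝ := fun n u => ((n+1:ℝ) * x^n / (1+ρ)^2) * u^(n+r) with hF
  have hSummCoef : Summable (fun n : ℕ => (n+1:ℝ) * x^n) := (aux_hasSum x hx0.le hx1).summable
  -- integrability
  have hFint : ∀ n : ℕ, Integrable (F n) (volume.restrict (Set.Ioc (0:ℝ) 1)) := by
    intro n
    exact (Continuous.integrableOn_Ioc (by continuity))
  -- norm integrals
  have hFnorm : ∀ n : ℕ, (∫ u in Set.Ioc (0:ℝ) 1, ‖F n u‖)
      = ((n+1:ℝ) * x^n / (1+ρ)^2) * (1/((n:ℝ)+r+1)) := by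
    intro n
    have h1 : ∀ u ∈ Set.Ioc (0:ℝ) 1, ‖F n u‖ = F n u := by
      intro u hu
      have hu0 : 0 ≤ u := hu.1.le
      rw [Real.norm_of_nonneg]
      positivity
    rw [setIntegral_congr_fun measurableSet_Ioc h1]
    have : (∫ u in Set.Ioc (0:ℝ) 1, F n u) = ∫ u in (0:ℝ)..1, F n u := by
      rw [intervalIntegral.integral_of_le (by norm_num)]
    rw [this, hF]
    simp only
    rw [intervalIntegral.integral_const_mul, integral_pow]
    push_cast
    ring
  -- summability of norm integrals
  have hFsum : Summable (fun n : ℕ => ∫ u in Set.Ioc (0:ℝ) 1, ‖F n u‖) := by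
    apply Summable.of_nonneg_of_le (fun n => ?_) (fun n => ?_) hSummCoef
    · rw [hFnorm n]; positivity
    · rw [hFnorm n]
      have h1 : ((n+1:ℝ) * x^n / (1+ρ)^2) ≤ (n+1:ℝ) * x^n := by
        apply div_le_self (by positivity)
        nlinarith
      calc ((n+1:ℝ) * x^n / (1+ρ)^2) * (1/((n:ℝ)+r+1))
          ≤ ((n+1:ℝ) * x^n / (1+ρ)^2) * 1 := by
            apply mul_le_mul_of_nonneg_left _ (by positivity)
            rw [div_le_one (by positivity)]
            have h2 : (0:ℝ) ≤ (n:ℝ) + (r:ℝ) := by positivity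
            linarith
        _ ≤ (n+1:ℝ) * x^n := by rw [mul_one]; exact h1
  -- pointwise sum
  have hpt : ∀ u ∈ Set.Ioc (0:ℝ) 1, u^r/(1+ρ-u*ρ)^2 = ∑' n : ℕ, F n u := by
    intro u hu
    have hu0 : 0 ≤ u := hu.1.le
    have hux0 : 0 ≤ u * x := by positivity
    have hux1 : u * x < 1 := lt_of_le_of_lt (by nlinarith [hu.2]) hx1
    have hs := (aux_hasSum (u*x) hux0 hux1).mul_left (u^r/(1+ρ)^2)
    have heq : (fun n : ℕ => (u^r/(1+ρ)^2) * ((n+1:ℝ) * (u*x)^n)) = fun n => F n u := by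
      funext n
      rw [hF]
      simp only [mul_pow, pow_add]
      ring
    rw [heq] at hs
    rw [hs.tsum_eq]
    have hfac : 1 + ρ - u*ρ = (1+ρ) * (1 - u*x) := by
      rw [hxdef]; field_simp
    have h1ux : (0:ℝ) < 1 - u*x := by linarith
    rw [hfac]
    rw [mul_pow]
    field_simp
  -- the integral equals the series
  have hInt : (∫ u in (0:ℝ)..1, u^r/(1+ρ-u*ρ)^2)
      = ∑' n : ℕ, ((n+1:ℝ) * x^n / (1+ρ)^2) * (1/((n:ℝ)+r+1)) := by
    rw [intervalIntegral.integral_of_le (by norm_num : (0:ℝ) ≤ 1)]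
    rw [setIntegral_congr_fun measurableSet_Ioc hpt]
    rw [← integral_tsum_of_summable_integral_norm hFint hFsum]
    apply tsum_congr
    intro n
    have : (∫ u in Set.Ioc (0:ℝ) 1, F n u) = ∫ u in (0:ℝ)..1, F n u := by
      rw [intervalIntegral.integral_of_le (by norm_num)]
    rw [this, hF]
    simp only
    rw [intervalIntegral.integral_const_mul, integral_pow]
    push_cast
    ring
  -- the series side: shift index
  have hS : Summable (fun n : ℕ => ((n:ℝ)/((r:ℝ)+n)) * x^n) := by
    apply Summable.of_nonneg_of_le (fun n => ?_) (fun n => ?_)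
      (summable_geometric_of_lt_one hx0.le hx1)
    · have : (0:ℝ) < (r:ℝ) + n := by
        have : (1:ℝ) ≤ (r:ℝ) := by exact_mod_cast hr
        positivity
      positivity
    · have hrn : (0:ℝ) < (r:ℝ) + n := by
        have : (1:ℝ) ≤ (r:ℝ) := by exact_mod_cast hr
        positivity
      have h1 : (n:ℝ)/((r:ℝ)+n) ≤ 1 := by
        rw [div_le_one hrn]
        have : (1:ℝ) ≤ (r:ℝ) := by exact_mod_cast hr
        linarith
      calc ((n:ℝ)/((r:ℝ)+n)) * x^n ≤ 1 * x^n := by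
            apply mul_le_mul_of_nonneg_right h1 (by positivity)
        _ = x^n := one_mul _
  have hshift : (∑' n : ℕ, ((n:ℝ)/((r:ℝ)+n)) * x^n)
      = (∑' n : ℕ, (((n:ℝ)+1)/((r:ℝ)+n+1)) * x^n) * x := by
    rw [hS.tsum_eq_zero_add]
    simp only [Nat.cast_zero, Nat.cast_add, Nat.cast_one, pow_zero]
    rw [zero_div, zero_mul, zero_add]
    rw [← tsum_mul_right]
    apply tsum_congr
    intro n
    rw [pow_succ]
    ring
  rw [hInt, hshift]
  have hconv : (∑' n : ℕ, ((n+1:ℝ) * x^n / (1+ρ)^2) * (1/((n:ℝ)+r+1)))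
      = (∑' n : ℕ, (((n:ℝ)+1)/((r:ℝ)+n+1)) * x^n) * (1/(1+ρ)^2) := by
    rw [← tsum_mul_right]
    apply tsum_congr
    intro n
    have h1 : ((n:ℝ)+r+1) ≠ 0 := by positivity
    field_simp
    ring
  rw [hconv]
  have hcoef : ((1-ρ)/(1+ρ)) * ρ^r * x = (1-ρ) * ρ^(r+1) * (1/(1+ρ)^2) := by
    rw [hxdef, pow_succ]
    field_simp
  set T := ∑' n : ℕ, (((n:ℝ)+1)/((r:ℝ)+n+1)) * x^n
  linear_combination T * hcoef
end

section
/- Define, for 0 < ρ < 1 and integers r ≥ 1, π₀(r) = (1-ρ)(1+ρ)^{r-1} ∫₁^{1+ρ} (1-1/u)^r du and π₁(r) = (1-ρ)(1+ρ)^r (r+1) ∫₁^{1+ρ} (1/u)(1-1/u)^r du. Then for all r ≥ 0, π₀(r+1) + π₁(r) = (1-ρ)ρ^{r+1}, where π₀(0) := 1-ρ is not needed since r+1 ≥ 1. -/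
theorem stmt_6 (ρ : ℝ) (hρ0 : 0 < ρ) (hρ1 : ρ < 1)
    (π₀ π₁ : ℕ → ℝ)
    (hπ₀ : ∀ r : ℕ, 1 ≤ r →
      π₀ r = (1-ρ) * (1+ρ)^(r-1) * ∫ u in (1:ℝ)..(1+ρ), (1-1/u)^r)
    (hπ₁ : ∀ r : ℕ,
      π₁ r = (1-ρ) * (1+ρ)^r * ((r:ℝ)+1) * ∫ u in (1:ℝ)..(1+ρ), (1/u)*(1-1/u)^r) :
    ∀ r : ℕ, π₀ (r+1) + π₁ r = (1-ρ) * ρ^(r+1) := by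
  intro r
  have h1ρ : (0:ℝ) < 1 + ρ := by linarith
  have hle : (1:ℝ) ≤ 1 + ρ := by linarith
  have hne : ∀ u : ℝ, u ∈ Set.uIcc (1:ℝ) (1+ρ) → u ≠ 0 := by
    intro u hu
    rw [Set.uIcc_of_le hle] at hu
    have := hu.1; positivity
  have hcont : ContinuousOn (fun u : ℝ => 1 - 1/u) (Set.uIcc (1:ℝ) (1+ρ)) :=
    continuousOn_const.sub (continuousOn_const.div continuousOn_id hne)
  have hcinv : ContinuousOn (fun u : ℝ => 1/u) (Set.uIcc (1:ℝ) (1+ρ)) :=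
    continuousOn_const.div continuousOn_id hne
  have hint1 : IntervalIntegrable (fun u : ℝ => (1-1/u)^(r+1)) MeasureTheory.volume 1 (1+ρ) :=
    (hcont.pow (r+1)).intervalIntegrable
  have hint2 : IntervalIntegrable (fun u : ℝ => (1/u)*(1-1/u)^r) MeasureTheory.volume 1 (1+ρ) :=
    (hcinv.mul (hcont.pow r)).intervalIntegrable
  have hderiv : ∀ u ∈ Set.uIcc (1:ℝ) (1+ρ),
      HasDerivAt (fun u : ℝ => u*(1-1/u)^(r+1))
        ((1-1/u)^(r+1) + ((r:ℝ)+1)*((1/u)*(1-1/u)^r)) u := by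
    intro u hu
    have hu0 : u ≠ 0 := hne u hu
    have h1 : HasDerivAt (fun u : ℝ => 1 - 1/u) (1/u^2) u := by
      have := (hasDerivAt_inv hu0).const_sub 1
      simpa [one_div, sub_neg_eq_add, inv_pow] using this.sub_const 0 |>.congr_deriv (by
        simp [inv_pow])
    have h2 : HasDerivAt (fun u : ℝ => u*(1-1/u)^(r+1)) (1 * (1-1/u)^(r+1) + u * (((r+1:ℕ):ℝ) * (1-1/u)^(r+1-1) * (1/u^2))) u := (hasDerivAt_id' u).mul (h1.pow (r+1))
    convert h2 using 1
    have hu2 : u^2 ≠ 0 := pow_ne_zero 2 hu0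
    rw [Nat.add_sub_cancel]
    push_cast
    field_simp
  have key : (∫ u in (1:ℝ)..(1+ρ),
      ((1-1/u)^(r+1) + ((r:ℝ)+1)*((1/u)*(1-1/u)^r)))
      = (1+ρ)*(ρ/(1+ρ))^(r+1) := by
    rw [intervalIntegral.integral_eq_sub_of_hasDerivAt hderiv
      (hint1.add (hint2.const_mul _))]
    have h' : (1:ℝ) - (1+ρ)⁻¹ = ρ/(1+ρ) := by field_simp; ring
    simp [h']
  rw [intervalIntegral.integral_add hint1 (hint2.const_mul _),
    intervalIntegral.integral_const_mul] at key
  rw [hπ₀ (r+1) (by omega), hπ₁ r]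
  simp only [Nat.add_sub_cancel]
  have hpow : ((ρ/(1+ρ))^(r+1) : ℝ) = ρ^(r+1)/(1+ρ)^(r+1) := div_pow _ _ _
  have hne2 : ((1+ρ):ℝ)^(r+1) ≠ 0 := pow_ne_zero _ (ne_of_gt h1ρ)
  have : (1-ρ) * (1+ρ)^r * ((∫ u in (1:ℝ)..(1+ρ), (1-1/u)^(r+1))
      + ((r:ℝ)+1) * ∫ u in (1:ℝ)..(1+ρ), (1/u)*(1-1/u)^r) = (1-ρ)*ρ^(r+1) := by
    rw [key, hpow]
    field_simp
    ring
  push_cast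
  linarith [this]
end

section
/- For 0 < ρ < 1, the function f₀(y) = (1-ρ)/((1+ρ)y-1)² · {(1+ρ)y² - (2+ρ)y - y·log[(1+ρ)(1-ρy)] + 1} and f₁ defined by f₁ = (1+ρ)f₀ + ((1+ρ)y-1)f₀' - (1-ρ) satisfy the ODE -2ρ f₀ - ρ y f₀' = [3ρy - 2(1+ρ)] f₁ + [ρy² - (1+ρ)y + 1] f₁' on the interval 0 < y < 1/(1+ρ). -/
set_option linter.all false
set_option maxHeartbeats 1000000

noncomputable def auxD0 (ρ x : ℝ) : ℝ :=
  (1-ρ) * (((2*(1+ρ)*x - (2+ρ) - Real.log ((1+ρ)*(1-ρ*x)))*(1-ρ*x) + ρ*x) * ((1+ρ)*x-1)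
      - 2*(1+ρ)*(1-ρ*x) * ((1+ρ)*x^2 - (2+ρ)*x - x*Real.log ((1+ρ)*(1-ρ*x)) + 1))
    / (((1+ρ)*x-1)^3 * (1-ρ*x))

noncomputable def auxD1 (ρ x : ℝ) : ℝ :=
  (1-ρ) * (((2*(1+ρ)*(1-ρ*x)^2 + 2*ρ*(1-ρ*x) + ρ^2*x) * ((1+ρ)*x-1)
        - (1+ρ) * ((2*(1+ρ)*x - (2+ρ) - Real.log ((1+ρ)*(1-ρ*x)))*(1-ρ*x) + ρ*x) * (1-ρ*x)) * ((1+ρ)*x-1)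
      - 3*(1+ρ)*(1-ρ*x) * (((2*(1+ρ)*x - (2+ρ) - Real.log ((1+ρ)*(1-ρ*x)))*(1-ρ*x) + ρ*x) * ((1+ρ)*x-1)
        - 2*(1+ρ)*(1-ρ*x) * ((1+ρ)*x^2 - (2+ρ)*x - x*Real.log ((1+ρ)*(1-ρ*x)) + 1)))
    / (((1+ρ)*x-1)^4 * (1-ρ*x)^2)

lemma aux_hlog (ρ x : ℝ) (hc : (0:ℝ) < 1+ρ) (hw : 0 < 1-ρ*x) :
    HasDerivAt (fun t => Real.log ((1+ρ)*(1-ρ*t))) (-((1+ρ)*ρ)/((1+ρ)*(1-ρ*x))) x := by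
  have hin : HasDerivAt (fun t : ℝ => (1+ρ)*(1-ρ*t)) (-((1+ρ)*ρ)) x := by
    have h := ((((hasDerivAt_id x).const_mul ρ).const_sub 1).const_mul (1+ρ))
    refine h.congr_deriv ?_
    ring
  exact hin.log (ne_of_gt (mul_pos hc hw))

lemma aux_hN (ρ x : ℝ) (hc : (0:ℝ) < 1+ρ) (hw : 0 < 1-ρ*x) :
    HasDerivAt (fun t => (1+ρ)*t^2 - (2+ρ)*t - t*Real.log ((1+ρ)*(1-ρ*t)) + 1)
      (2*(1+ρ)*x - (2+ρ) - Real.log ((1+ρ)*(1-ρ*x)) + ρ*x/(1-ρ*x)) x := by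
  have hL := aux_hlog ρ x hc hw
  have h := ((((hasDerivAt_pow 2 x).const_mul (1+ρ)).sub
      ((hasDerivAt_id x).const_mul (2+ρ))).sub ((hasDerivAt_id x).mul hL)).add_const 1
  refine h.congr_deriv ?_
  have hwne : (1-ρ*x) ≠ 0 := ne_of_gt hw
  have hcne : (1+ρ) ≠ 0 := ne_of_gt hc
  simp only [id_eq]
  field_simp
  ring

lemma aux_hNp (ρ x : ℝ) (hc : (0:ℝ) < 1+ρ) (hw : 0 < 1-ρ*x) :
    HasDerivAt (fun t => 2*(1+ρ)*t - (2+ρ) - Real.log ((1+ρ)*(1-ρ*t)) + ρ*t/(1-ρ*t))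
      (2*(1+ρ) + 2*ρ/(1-ρ*x) + ρ^2*x/(1-ρ*x)^2) x := by
  have hL := aux_hlog ρ x hc hw
  have hwd : HasDerivAt (fun t : ℝ => 1-ρ*t) (-ρ) x := by
    have h := ((hasDerivAt_id x).const_mul ρ).const_sub 1
    refine h.congr_deriv ?_
    ring
  have h := ((((hasDerivAt_id x).const_mul (2*(1+ρ))).sub_const (2+ρ)).sub hL).add
      (((hasDerivAt_id x).const_mul ρ).div hwd (ne_of_gt hw))
  refine h.congr_deriv ?_
  have hwne : (1-ρ*x) ≠ 0 := ne_of_gt hw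
  have hcne : (1+ρ) ≠ 0 := ne_of_gt hc
  simp only [id_eq]
  field_simp
  ring

lemma aux_hu (ρ x : ℝ) : HasDerivAt (fun t : ℝ => (1+ρ)*t-1) (1+ρ) x := by
  have h := ((hasDerivAt_id x).const_mul (1+ρ)).sub_const 1
  refine h.congr_deriv ?_
  ring

lemma aux_hg0 (ρ x : ℝ) (hc : (0:ℝ) < 1+ρ) (hu : (1+ρ)*x-1 ≠ 0) (hw : 0 < 1-ρ*x) :
    HasDerivAt (fun t => (1-ρ)/((1+ρ)*t-1)^2 *
      ((1+ρ)*t^2 - (2+ρ)*t - t * Real.log ((1+ρ)*(1-ρ*t)) + 1)) (auxD0 ρ x) x := by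
  have hN := aux_hN ρ x hc hw
  have hq : HasDerivAt (fun t : ℝ => (1-ρ)/((1+ρ)*t-1)^2)
      ((0 * ((1+ρ)*x-1)^2 - (1-ρ) * ((2:ℕ) * ((1+ρ)*x-1)^(2-1) * (1+ρ))) / (((1+ρ)*x-1)^2)^2) x :=
    (hasDerivAt_const x (1-ρ)).div ((aux_hu ρ x).pow 2) (pow_ne_zero 2 hu)
  have h := hq.mul hN
  refine h.congr_deriv ?_
  have hwne : (1-ρ*x) ≠ 0 := ne_of_gt hw
  unfold auxD0
  set L := Real.log ((1+ρ)*(1-ρ*x)) with hL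
  field_simp
  ring

set_option maxRecDepth 100000 in
lemma aux_hD0 (ρ x : ℝ) (hc : (0:ℝ) < 1+ρ) (hu : (1+ρ)*x-1 ≠ 0) (hw : 0 < 1-ρ*x) :
    HasDerivAt (fun t => auxD0 ρ t) (auxD1 ρ x) x := by
  have hN := aux_hN ρ x hc hw
  have hL := aux_hlog ρ x hc hw
  have hwne : (1-ρ*x) ≠ 0 := ne_of_gt hw
  have hcne : (1+ρ) ≠ 0 := ne_of_gt hc
  have hwd : HasDerivAt (fun t : ℝ => 1-ρ*t) (-ρ) x := by
    have h := ((hasDerivAt_id x).const_mul ρ).const_sub 1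
    refine h.congr_deriv ?_
    ring
  have hnpw := (((((hasDerivAt_id x).const_mul (2*(1+ρ))).sub_const (2+ρ)).sub hL).mul hwd).add
      ((hasDerivAt_id x).const_mul ρ)
  have hnum := ((hnpw.mul (aux_hu ρ x)).sub ((hwd.const_mul (2*(1+ρ))).mul hN)).const_mul (1-ρ)
  have h := hnum.div (((aux_hu ρ x).pow 3).mul hwd) (mul_ne_zero (pow_ne_zero 3 hu) hwne)
  unfold auxD0 auxD1
  refine h.congr_deriv ?_
  simp only [id_eq, Pi.add_apply, Pi.sub_apply, Pi.mul_apply, Pi.div_apply, Pi.pow_apply]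
  set L := Real.log ((1+ρ)*(1-ρ*x)) with hL
  field_simp
  ring

theorem stmt_8 (ρ : ℝ) (hρ0 : 0 < ρ) (hρ1 : ρ < 1)
    (f₀ f₁ : ℝ → ℝ)
    (hf₀ : ∀ y : ℝ, f₀ y = (1-ρ)/((1+ρ)*y-1)^2 *
      ((1+ρ)*y^2 - (2+ρ)*y - y * Real.log ((1+ρ)*(1-ρ*y)) + 1))
    (hf₁ : ∀ y : ℝ, f₁ y = (1+ρ) * f₀ y + ((1+ρ)*y-1) * deriv f₀ y - (1-ρ)) :
    ∀ y : ℝ, 0 < y → y < 1/(1+ρ) →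
      -2*ρ*(f₀ y) - ρ*y*(deriv f₀ y)
        = (3*ρ*y - 2*(1+ρ)) * (f₁ y) + (ρ*y^2 - (1+ρ)*y + 1) * (deriv f₁ y) := by
  intro y hy0 hy1
  have hc : (0:ℝ) < 1+ρ := by linarith
  have h1 : (1+ρ)*y < 1 := by
    rw [lt_div_iff₀ hc] at hy1
    nlinarith
  have hu : (1+ρ)*y - 1 < 0 := by linarith
  have hune : (1+ρ)*y - 1 ≠ 0 := ne_of_lt hu
  have hw : 0 < 1-ρ*y := by nlinarith
  have hfg : f₀ = fun t => (1-ρ)/((1+ρ)*t-1)^2 *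
      ((1+ρ)*t^2 - (2+ρ)*t - t * Real.log ((1+ρ)*(1-ρ*t)) + 1) := funext hf₀
  have hev1 : ∀ᶠ x in nhds y, (1+ρ)*x - 1 < 0 := by
    have : ContinuousAt (fun x : ℝ => (1+ρ)*x - 1) y := by fun_prop
    exact this.eventually_lt continuousAt_const hu
  have hev2 : ∀ᶠ x in nhds y, 0 < 1-ρ*x := by
    have : ContinuousAt (fun x : ℝ => 1-ρ*x) y := by fun_prop
    exact continuousAt_const.eventually_lt this hw
  have hderiv0 : ∀ᶠ x in nhds y, deriv f₀ x = auxD0 ρ x := by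
    filter_upwards [hev1, hev2] with x hx1 hx2
    rw [hfg]
    exact (aux_hg0 ρ x hc (ne_of_lt hx1) hx2).deriv
  have hd0y : deriv f₀ y = auxD0 ρ y := by
    rw [hfg]; exact (aux_hg0 ρ y hc hune hw).deriv
  have hf1ev : f₁ =ᶠ[nhds y] fun x => (1+ρ) * ((1-ρ)/((1+ρ)*x-1)^2 *
      ((1+ρ)*x^2 - (2+ρ)*x - x * Real.log ((1+ρ)*(1-ρ*x)) + 1)) + ((1+ρ)*x-1) * auxD0 ρ x - (1-ρ) := by
    filter_upwards [hderiv0] with x hx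
    rw [hf₁ x, hx, hfg]
  have hd1 : HasDerivAt (fun x => (1+ρ) * ((1-ρ)/((1+ρ)*x-1)^2 *
      ((1+ρ)*x^2 - (2+ρ)*x - x * Real.log ((1+ρ)*(1-ρ*x)) + 1)) + ((1+ρ)*x-1) * auxD0 ρ x - (1-ρ))
      ((1+ρ) * auxD0 ρ y + ((1+ρ) * auxD0 ρ y + ((1+ρ)*y-1) * auxD1 ρ y)) y :=
    (((aux_hg0 ρ y hc hune hw).const_mul (1+ρ)).add
      ((aux_hu ρ y).mul (aux_hD0 ρ y hc hune hw))).sub_const (1-ρ)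
  have hderivf1 : deriv f₁ y = (1+ρ) * auxD0 ρ y + ((1+ρ) * auxD0 ρ y + ((1+ρ)*y-1) * auxD1 ρ y) := by
    rw [hf1ev.deriv_eq, hd1.deriv]
  rw [hf₁ y, hd0y, hderivf1, hf₀ y]
  unfold auxD0 auxD1
  have hwne : (1-ρ*y) ≠ 0 := ne_of_gt hw
  set L := Real.log ((1+ρ)*(1-ρ*y)) with hL
  field_simp
  ring
end

section
/- For 0 < ρ < 1 and y with |y| < 1/(1+ρ), the function f₀(y) = (1-ρ)/((1+ρ)y-1)² · {(1+ρ)y² - (2+ρ)y - y·log[(1+ρ)(1-ρy)] + 1} has the integral representation f₀(y) = ((1-ρ)/(1+ρ)) · [1 + ∫₁^{1+ρ} u/(u - (1+ρ)(u-1)y) du]. -/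
theorem stmt_9 (ρ : ℝ) (hρ0 : 0 < ρ) (hρ1 : ρ < 1) (y : ℝ) (hy : |y| < 1/(1+ρ)) :
    (1-ρ)/((1+ρ)*y-1)^2 *
      ((1+ρ)*y^2 - (2+ρ)*y - y * Real.log ((1+ρ)*(1-ρ*y)) + 1)
    = ((1-ρ)/(1+ρ)) * (1 + ∫ u in (1:ℝ)..(1+ρ), u/(u - (1+ρ)*(u-1)*y)) := by
  have h1ρ : (0:ℝ) < 1 + ρ := by linarith
  have hy2 := abs_lt.mp hy
  have hya : (1+ρ)*y < 1 := by
    have h := hy2.2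
    rw [lt_div_iff₀ h1ρ] at h
    nlinarith
  set a := 1 - (1+ρ)*y with ha
  set b := (1+ρ)*y with hb
  have haa : 0 < a := by simp only [ha]; linarith
  have hle : (1:ℝ) ≤ 1 + ρ := by linarith
  have hden : ∀ x ∈ Set.uIcc (1:ℝ) (1+ρ), 0 < a*x + b := by
    intro x hx
    rw [Set.uIcc_of_le hle] at hx
    nlinarith [hx.1]
  have key : ∀ x ∈ Set.uIcc (1:ℝ) (1+ρ),
      HasDerivAt (fun u => u/a - (b/a^2) * Real.log (a*u+b))
        (x/(x - (1+ρ)*(x-1)*y)) x := by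
    intro x hx
    have hpos : 0 < a*x + b := hden x hx
    have hlin : HasDerivAt (fun u : ℝ => a*u+b) a x := by
      simpa using ((hasDerivAt_id x).const_mul a).add_const b
    have hd : HasDerivAt (fun u => u/a - (b/a^2) * Real.log (a*u+b))
        (1/a - (b/a^2) * (a * (a*x+b)⁻¹)) x := by
      apply HasDerivAt.sub
      · simpa using (hasDerivAt_id x).div_const a
      · have := ((Real.hasDerivAt_log hpos.ne').comp x hlin).const_mul (b/a^2)
        simpa [mul_comm] using this
    convert hd using 1
    have heq : x - (1+ρ)*(x-1)*y = a*x+b := by simp only [ha, hb]; ring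
    rw [heq]
    field_simp
    rw [eq_sub_iff_add_eq, ← add_div, div_self (by rw [mul_comm x a]; exact hpos.ne')]
  have hcont : ContinuousOn (fun u : ℝ => u/(u - (1+ρ)*(u-1)*y)) (Set.uIcc 1 (1+ρ)) := by
    apply ContinuousOn.div continuousOn_id (by fun_prop)
    intro x hx
    have := hden x hx
    have heq : x - (1+ρ)*(x-1)*y = a*x+b := by simp only [ha, hb]; ring
    rw [heq]; exact ne_of_gt this
  have hint := intervalIntegral.integral_eq_sub_of_hasDerivAt key
    (hcont.intervalIntegrable)
  rw [hint]
  have harg : a*(1+ρ)+b = (1+ρ)*(1-ρ*y) := by simp only [ha, hb]; ring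
  have harg1 : a*1+b = 1 := by simp only [ha, hb]; ring
  simp only [harg, harg1, Real.log_one, mul_zero, sub_zero]
  have hsq : ((1+ρ)*y-1)^2 = a^2 := by simp only [ha]; ring
  rw [hsq]
  have ha2 : a^2 ≠ 0 := pow_ne_zero 2 haa.ne'
  field_simp
  ring
end

section
/- For 0 < ρ < 1, the generating function G(z) = (ρ(1-ρ)/((1+ρ)[1-(1+ρ)z]²)) · {1 - ((1+ρ)/ρ)·z·log[(1-ρz)(1+ρ)] - (1+ρ)z} satisfies the first-order ODE z[1-(1+ρ)z]G'(z) - [1+(1+ρ)z]G(z) = -(ρ(1-ρ)/(1+ρ))·(1+z)/(1-ρz) for 0 < z < 1/(1+ρ). -/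
theorem stmt_17 (ρ : ℝ) (hρ0 : 0 < ρ) (hρ1 : ρ < 1)
    (G : ℝ → ℝ)
    (hG : ∀ z : ℝ, G z = (ρ*(1-ρ)/((1+ρ)*(1-(1+ρ)*z)^2)) *
      (1 - ((1+ρ)/ρ)*z*Real.log ((1-ρ*z)*(1+ρ)) - (1+ρ)*z)) :
    ∀ z : ℝ, 0 < z → z < 1/(1+ρ) →
      z*(1-(1+ρ)*z)*(deriv G z) - (1+(1+ρ)*z)*(G z)
        = -(ρ*(1-ρ)/(1+ρ)) * (1+z)/(1-ρ*z) := by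
  have hGfun : G = fun z => (ρ*(1-ρ)/((1+ρ)*(1-(1+ρ)*z)^2)) *
      (1 - ((1+ρ)/ρ)*z*Real.log ((1-ρ*z)*(1+ρ)) - (1+ρ)*z) := funext hG
  intro z hz0 hz1
  have ha : (0:ℝ) < 1+ρ := by linarith
  have hz1' : (1+ρ)*z < 1 := by
    have := (lt_div_iff₀ ha).mp hz1; linarith
  have hD : 0 < 1-(1+ρ)*z := by linarith
  have hR : 0 < 1-ρ*z := by nlinarith
  have hRa : (1-ρ*z)*(1+ρ) ≠ 0 := ne_of_gt (mul_pos hR ha)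
  -- derivative of inner log argument
  have hu : HasDerivAt (fun z : ℝ => (1-ρ*z)*(1+ρ)) (-ρ*(1+ρ)) z := by
    have h1 : HasDerivAt (fun z : ℝ => 1-ρ*z) (-ρ) z := by
      simpa using ((hasDerivAt_id z).const_mul ρ).const_sub 1
    simpa using h1.mul_const (1+ρ)
  have hlog : HasDerivAt (fun z : ℝ => Real.log ((1-ρ*z)*(1+ρ)))
      ((-ρ*(1+ρ)) / ((1-ρ*z)*(1+ρ))) z := hu.log hRa
  -- numerator
  have hN : HasDerivAt (fun z : ℝ => 1 - ((1+ρ)/ρ)*z*Real.log ((1-ρ*z)*(1+ρ)) - (1+ρ)*z)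
      (0 - (((1+ρ)/ρ) * Real.log ((1-ρ*z)*(1+ρ)) +
        ((1+ρ)/ρ)*z * ((-ρ*(1+ρ)) / ((1-ρ*z)*(1+ρ)))) - (1+ρ)) z := by
    have h1 : HasDerivAt (fun z : ℝ => ((1+ρ)/ρ)*z) ((1+ρ)/ρ) z := by
      simpa using (hasDerivAt_id z).const_mul ((1+ρ)/ρ)
    exact ((hasDerivAt_const z 1).sub (h1.mul hlog)).sub
      (by simpa using (hasDerivAt_id z).const_mul (1+ρ))
  -- leading factor
  have hC : HasDerivAt (fun z : ℝ => ρ*(1-ρ)/((1+ρ)*(1-(1+ρ)*z)^2))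
      (-(ρ*(1-ρ) * ((1+ρ) * (2*(1-(1+ρ)*z)^1 * (-(1+ρ))))) / ((1+ρ)*(1-(1+ρ)*z)^2)^2) z := by
    have hd : HasDerivAt (fun z : ℝ => (1+ρ)*(1-(1+ρ)*z)^2)
        ((1+ρ) * (2*(1-(1+ρ)*z)^1 * (-(1+ρ)))) z := by
      have h1 : HasDerivAt (fun z : ℝ => 1-(1+ρ)*z) (-(1+ρ)) z := by
        simpa using ((hasDerivAt_id z).const_mul (1+ρ)).const_sub 1
      have := (h1.pow 2).const_mul (1+ρ)
      simpa [mul_comm, mul_assoc, mul_left_comm] using this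
    exact ((hasDerivAt_const z (ρ*(1-ρ))).div hd
      (by positivity)).congr_deriv (by ring)
  have hGd : HasDerivAt G
      ((-(ρ*(1-ρ) * ((1+ρ) * (2*(1-(1+ρ)*z)^1 * (-(1+ρ))))) / ((1+ρ)*(1-(1+ρ)*z)^2)^2) *
        (1 - ((1+ρ)/ρ)*z*Real.log ((1-ρ*z)*(1+ρ)) - (1+ρ)*z)
       + (ρ*(1-ρ)/((1+ρ)*(1-(1+ρ)*z)^2)) *
        (0 - (((1+ρ)/ρ) * Real.log ((1-ρ*z)*(1+ρ)) +
          ((1+ρ)/ρ)*z * ((-ρ*(1+ρ)) / ((1-ρ*z)*(1+ρ)))) - (1+ρ))) z := by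
    rw [hGfun]; exact hC.mul hN
  rw [hGd.deriv, hG z]
  have hρ : ρ ≠ 0 := ne_of_gt hρ0
  have hD' : (1-(1+ρ)*z) ≠ 0 := ne_of_gt hD
  have hR' : (1-ρ*z) ≠ 0 := ne_of_gt hR
  have ha' : (1+ρ) ≠ 0 := ne_of_gt ha
  have hR'' : (1-z*ρ) ≠ 0 := by rwa [mul_comm]
  have hD'' : (1-z*(1+ρ)) ≠ 0 := by rwa [mul_comm]
  field_simp
  ring
end
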